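/- arXiv:1310.8302 — 7 statements merged into one kernel-verified Lean document; each statement's English description precedes it below -/
import Mathlib

section
/- Suppose an ontological model reproduces the quantum probability of the optimal two-outcome discrimination measurement for pure states ψ and φ on a finite ontic space Λ. Then the classical overlap of the epistemic states is at most the quantum overlap: ∑_λ min(μ_ψ(λ), μ_φ(λ)) ≤ 1 − √(1 − |⟨ψ|φ⟩|²). -/
theorem overlap_bound_from_optimal_discrimination
    (Λ : Type) [Fintype Λ]
    (E : Type) [NormedAddCommGroup E] [InnerProductSpace ℂ E] [FiniteDimensional ℂ E]
    (ψ φ : E) (hψ : ‖ψ‖ = 1) (hφ : ‖φ‖ = 1)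
    (μψ μφ : Λ → ℝ)
    (hμψ : ∀ l, 0 ≤ μψ l) (hμφ : ∀ l, 0 ≤ μφ l)
    (hμψ1 : ∑ l, μψ l = 1) (hμφ1 : ∑ l, μφ l = 1)
    (hmodel : ∃ ξ : Λ → ℝ, (∀ l, 0 ≤ ξ l) ∧ (∀ l, ξ l ≤ 1) ∧
      (1/2) * ∑ l, ξ l * μψ l + (1/2) * ∑ l, (1 - ξ l) * μφ l
        = (1/2) * (1 + Real.sqrt (1 - ‖(inner ℂ ψ φ : ℂ)‖^2))) :
    ∑ l, min (μψ l) (μφ l) ≤ 1 - Real.sqrt (1 - ‖(inner ℂ ψ φ : ℂ)‖^2) := by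
  obtain ⟨ξ, hξ0, hξ1, hsum⟩ := hmodel
  have key : ∀ l, ξ l * μψ l + (1 - ξ l) * μφ l ≤ μψ l + μφ l - min (μψ l) (μφ l) := by
    intro l
    have hmax : μψ l + μφ l - min (μψ l) (μφ l) = max (μψ l) (μφ l) := by
      rcases le_total (μψ l) (μφ l) with h | h <;> simp [min_eq_left, min_eq_right,
        max_eq_left, max_eq_right, h] <;> ring
    rw [hmax]
    calc ξ l * μψ l + (1 - ξ l) * μφ l
        ≤ ξ l * max (μψ l) (μφ l) + (1 - ξ l) * max (μψ l) (μφ l) := by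
          gcongr
          · exact hξ0 l
          · exact le_max_left _ _
          · linarith [hξ1 l]
          · exact le_max_right _ _
      _ = max (μψ l) (μφ l) := by ring
  have hsumle : ∑ l, ξ l * μψ l + ∑ l, (1 - ξ l) * μφ l
      ≤ 2 - ∑ l, min (μψ l) (μφ l) := by
    have := Finset.sum_le_sum (s := Finset.univ) (fun l _ => key l)
    rw [Finset.sum_add_distrib] at this
    have hR : ∑ i : Λ, (μψ i + μφ i - μψ i ⊓ μφ i)
        = ∑ i, μψ i + ∑ i, μφ i - ∑ i, μψ i ⊓ μφ i := by
      rw [Finset.sum_sub_distrib, Finset.sum_add_distrib]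
    rw [hR] at this
    simp only [min_def] at *
    linarith [this]
  have h2 : (1/2:ℝ) * ∑ l, ξ l * μψ l + (1/2) * ∑ l, (1 - ξ l) * μφ l
      ≤ (1/2) * (2 - ∑ l, min (μψ l) (μφ l)) := by linarith
  rw [hsum] at h2
  linarith
end

section
/- Three unit vectors a, b, c in a complex Hilbert space with pairwise squared overlaps x₁ = |⟨a|b⟩|², x₂ = |⟨b|c⟩|², x₃ = |⟨c|a⟩|² satisfying x₁ + x₂ + x₃ < 1 and (x₁ + x₂ + x₃ − 1)² ≥ 4x₁x₂x₃ admit an orthonormal basis {f₁, f₂, f₃} of their span (assumed 3-dimensional) with ⟨f₁|a⟩ = 0, ⟨f₂|b⟩ = 0, ⟨f₃|c⟩ = 0. -/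
open scoped ComplexConjugate

theorem exists_root_t (x₁ x₂ x₃ : ℝ) (h₁ : 0 ≤ x₁) (h₂ : 0 ≤ x₂) (h₃ : 0 ≤ x₃)
    (hS : x₁ + x₂ + x₃ < 1) (hD : 4 * x₁ * x₂ * x₃ ≤ (x₁ + x₂ + x₃ - 1)^2) :
    ∃ t : ℝ, x₁ < t ∧ t ≤ 1 ∧ x₁ + x₂ * t < t ∧
      x₃ * (t - x₁) = (1 - t) * (t - x₁ - x₂ * t) := by
  have hB : 0 < 1 - x₂ := by linarith
  set D : ℝ := (x₁ + x₂ + x₃ - 1)^2 - 4 * x₁ * x₂ * x₃ with hDdef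
  have hD0 : 0 ≤ D := by linarith
  set s : ℝ := Real.sqrt D with hsdef
  have hs0 : 0 ≤ s := Real.sqrt_nonneg _
  have hs : s ^ 2 = D := Real.sq_sqrt hD0
  set t : ℝ := (1 + x₁ - x₂ - x₃ + s) / (2 * (1 - x₂)) with htdef
  have key : t * (2 * (1 - x₂)) = 1 + x₁ - x₂ - x₃ + s := by
    rw [htdef, div_mul_cancel₀]
    positivity
  refine ⟨t, ?_, ?_, ?_, ?_⟩
  · nlinarith [key]
  · have hM : s ≤ 1 - x₁ - x₂ + x₃ := by
      nlinarith [hs, mul_nonneg h₃ (by linarith : (0:ℝ) ≤ 1 - x₁ - x₂ - x₃),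
        mul_nonneg (mul_nonneg h₁ h₂) h₃, sq_nonneg x₃]
    nlinarith [key]
  · nlinarith [key]
  · nlinarith [hs, key, sq_nonneg s]

theorem pp_incompatible_of_overlap_inequalities
    (E : Type) [NormedAddCommGroup E] [InnerProductSpace ℂ E] [FiniteDimensional ℂ E]
    (a b c : E) (ha : ‖a‖ = 1) (hb : ‖b‖ = 1) (hc : ‖c‖ = 1)
    (hspan : Module.finrank ℂ (Submodule.span ℂ ({a, b, c} : Set E)) = 3)
    (h1 : ‖(inner ℂ a b : ℂ)‖^2 + ‖(inner ℂ b c : ℂ)‖^2 + ‖(inner ℂ c a : ℂ)‖^2 < 1)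
    (h2 : (‖(inner ℂ a b : ℂ)‖^2 + ‖(inner ℂ b c : ℂ)‖^2 + ‖(inner ℂ c a : ℂ)‖^2 - 1)^2
        ≥ 4 * ‖(inner ℂ a b : ℂ)‖^2 * ‖(inner ℂ b c : ℂ)‖^2 * ‖(inner ℂ c a : ℂ)‖^2) :
    ∃ f : Fin 3 → E, Orthonormal ℂ f ∧
      (∀ i, f i ∈ Submodule.span ℂ ({a, b, c} : Set E)) ∧
      (inner ℂ (f 0) a : ℂ) = 0 ∧ (inner ℂ (f 1) b : ℂ) = 0 ∧ (inner ℂ (f 2) c : ℂ) = 0 := by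
  classical
  set p : ℂ := inner ℂ a b with hp
  set q : ℂ := inner ℂ b c with hq
  set r : ℂ := inner ℂ c a with hr
  set x₁ : ℝ := ‖p‖^2 with hx₁
  set x₂ : ℝ := ‖q‖^2 with hx₂
  set x₃ : ℝ := ‖r‖^2 with hx₃
  obtain ⟨t, ht1, ht2, ht3, ht4⟩ := exists_root_t x₁ x₂ x₃ (by positivity) (by positivity)
    (by positivity) h1 (by linarith)
  have hx₁0 : 0 ≤ x₁ := by positivity
  have ht0 : 0 < t := lt_of_le_of_lt hx₁0 ht1
  -- real quantities
  set u : ℝ := Real.sqrt t with hu_def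
  have hu2 : u^2 = t := Real.sq_sqrt ht0.le
  have hu0 : 0 < u := Real.sqrt_pos.mpr ht0
  set w : ℝ := Real.sqrt (1 - t) with hw_def
  have hw2 : w^2 = 1 - t := Real.sq_sqrt (by linarith)
  have hw0 : 0 ≤ w := Real.sqrt_nonneg _
  set v : ℝ := Real.sqrt ((t - x₁)/t) with hv_def
  have hv2 : v^2 = (t - x₁)/t := Real.sq_sqrt (div_nonneg (by linarith) ht0.le)
  have hv0 : 0 < v := Real.sqrt_pos.mpr (div_pos (by linarith) ht0)
  have htx : (0:ℝ) < t - x₁ := by linarith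
  set g : ℝ := (t - x₁ - x₂ * t)/(t - x₁) with hg_def
  have hg0 : 0 < g := div_pos (by linarith) htx
  have hwg : (1 - t) * g = x₃ := by
    rw [hg_def, mul_div_assoc', div_eq_iff (ne_of_gt htx)]
    linear_combination -ht4
  set γ₂ : ℂ := if r = 0 then ((Real.sqrt g : ℝ) : ℂ)
    else ((Real.sqrt g : ℝ) : ℂ) * conj r / (‖r‖ : ℂ) with hγ_def
  have hγn : ‖γ₂‖ = Real.sqrt g := by
    rw [hγ_def]
    split_ifs with h
    · rw [Complex.norm_real, Real.norm_of_nonneg (Real.sqrt_nonneg _)]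
    · rw [norm_div, norm_mul, Complex.norm_real, Real.norm_of_nonneg (Real.sqrt_nonneg _),
        RCLike.norm_conj, Complex.norm_real, Real.norm_of_nonneg (norm_nonneg r),
        mul_div_assoc, div_self (by simpa using h), mul_one]
  have hγnorm : conj γ₂ * γ₂ = (g : ℂ) := by
    rw [RCLike.conj_mul, hγn]
    rw [← RCLike.ofReal_pow, Real.sq_sqrt hg0.le]
    norm_cast
  have hγr : (w : ℂ) * γ₂ = conj r := by
    rw [hγ_def]
    split_ifs with h
    · have hx₃0 : x₃ = 0 := by simp [hx₃, h]
      have h1t : 1 - t = 0 := by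
        rcases mul_eq_zero.mp (by rw [hwg, hx₃0]) with h' | h'
        · exact h'
        · exact absurd h' (ne_of_gt hg0)
      have hw' : w = 0 := by rw [hw_def, h1t, Real.sqrt_zero]
      simp [hw', h]
    · have hkey : w * Real.sqrt g = ‖r‖ := by
        have h1' : (w * Real.sqrt g)^2 = ‖r‖^2 := by
          rw [mul_pow, hw2, Real.sq_sqrt hg0.le, hwg]
        calc w * Real.sqrt g = Real.sqrt ((w * Real.sqrt g)^2) :=
              (Real.sqrt_sq (mul_nonneg hw0 (Real.sqrt_nonneg g))).symm
          _ = Real.sqrt (‖r‖^2) := by rw [h1']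
          _ = ‖r‖ := Real.sqrt_sq (norm_nonneg r)
      have hck : ((w:ℂ) * ((Real.sqrt g : ℝ):ℂ)) = ((‖r‖:ℝ):ℂ) := by
        norm_cast
      have hrn : ((‖r‖:ℝ):ℂ) ≠ 0 := by simpa using h
      calc (w:ℂ) * (((Real.sqrt g : ℝ):ℂ) * conj r / (‖r‖:ℂ))
          = ((w:ℂ) * ((Real.sqrt g : ℝ):ℂ)) * conj r / (‖r‖:ℂ) := by ring
        _ = ((‖r‖:ℝ):ℂ) * conj r / (‖r‖:ℂ) := by rw [hck]
        _ = conj r := by rw [mul_comm, mul_div_assoc, div_self hrn, mul_one]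
  -- the model vectors in ℂ³
  set a' : EuclideanSpace ℂ (Fin 3) := (WithLp.equiv 2 (Fin 3 → ℂ)).symm ![0, (w:ℂ), (u:ℂ)] with ha'
  set b' : EuclideanSpace ℂ (Fin 3) := (WithLp.equiv 2 (Fin 3 → ℂ)).symm ![(v:ℂ), 0, p / (u:ℂ)] with hb'
  set c' : EuclideanSpace ℂ (Fin 3) := (WithLp.equiv 2 (Fin 3 → ℂ)).symm ![q / (v:ℂ), γ₂, 0] with hc'
  have hcu : ((u:ℝ):ℂ) ≠ 0 := by exact_mod_cast hu0.ne'
  have hcv : ((v:ℝ):ℂ) ≠ 0 := by exact_mod_cast hv0.ne'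
  have hpp : conj p * p = ((x₁:ℝ):ℂ) := by
    rw [RCLike.conj_mul, ← RCLike.ofReal_pow]; norm_cast
  have hqq : conj q * q = ((x₂:ℝ):ℂ) := by
    rw [RCLike.conj_mul, ← RCLike.ofReal_pow]; norm_cast
  have e00 : (inner ℂ a' a' : ℂ) = 1 := by
    rw [ha', WithLp.equiv_symm_apply, PiLp.inner_apply]
    simp only [Fin.sum_univ_three, PiLp.toLp_apply, Matrix.cons_val_zero, Matrix.cons_val_one, Matrix.cons_val_two, Matrix.head_cons,
      Matrix.tail_cons, map_zero, mul_zero, zero_mul, add_zero, zero_add,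
      RCLike.inner_apply', Complex.conj_ofReal]
    norm_cast
    have hww : w * w + u * u = w^2 + u^2 := by ring
    rw [hww, hw2, hu2]; ring
  have e01 : (inner ℂ a' b' : ℂ) = p := by
    simp [ha', hb', PiLp.inner_apply, Fin.sum_univ_three, WithLp.equiv_symm_apply, PiLp.toLp_apply,
      RCLike.inner_apply, Complex.conj_ofReal]
    field_simp
  have e02 : (inner ℂ a' c' : ℂ) = conj r := by
    simp [ha', hc', PiLp.inner_apply, Fin.sum_univ_three, WithLp.equiv_symm_apply, PiLp.toLp_apply,
      RCLike.inner_apply, Complex.conj_ofReal]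
    rw [mul_comm]; exact hγr
  have e11 : (inner ℂ b' b' : ℂ) = 1 := by
    rw [hb', WithLp.equiv_symm_apply, PiLp.inner_apply]
    simp only [Fin.sum_univ_three, PiLp.toLp_apply, Matrix.cons_val_zero, Matrix.cons_val_one, Matrix.cons_val_two, Matrix.head_cons,
      Matrix.tail_cons, map_zero, mul_zero, zero_mul, add_zero, zero_add,
      RCLike.inner_apply', Complex.conj_ofReal, map_div₀]
    rw [div_mul_div_comm, hpp]
    have huu : ((u:ℝ):ℂ) * ((u:ℝ):ℂ) = ((t:ℝ):ℂ) := by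
      norm_cast
      calc u * u = u^2 := by ring
        _ = t := hu2
    rw [huu]
    have hvv : ((v:ℝ):ℂ) * ((v:ℝ):ℂ) = (((t - x₁)/t : ℝ):ℂ) := by
      norm_cast
      calc v * v = v^2 := by ring
        _ = (t - x₁)/t := hv2
    rw [hvv]
    norm_cast
    rw [← add_div]
    field_simp
    ring
  have e12 : (inner ℂ b' c' : ℂ) = q := by
    simp [hb', hc', PiLp.inner_apply, Fin.sum_univ_three, WithLp.equiv_symm_apply, PiLp.toLp_apply,
      RCLike.inner_apply, Complex.conj_ofReal]
    field_simp
  have e22 : (inner ℂ c' c' : ℂ) = 1 := by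
    rw [hc', WithLp.equiv_symm_apply, PiLp.inner_apply]
    simp only [Fin.sum_univ_three, PiLp.toLp_apply, Matrix.cons_val_zero, Matrix.cons_val_one, Matrix.cons_val_two, Matrix.head_cons,
      Matrix.tail_cons, map_zero, mul_zero, zero_mul, add_zero, zero_add,
      RCLike.inner_apply', Complex.conj_ofReal, map_div₀]
    rw [div_mul_div_comm, hqq, hγnorm]
    have hvv : ((v:ℝ):ℂ) * ((v:ℝ):ℂ) = (((t - x₁)/t : ℝ):ℂ) := by
      norm_cast
      calc v * v = v^2 := by ring
        _ = (t - x₁)/t := hv2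
    rw [hvv]
    norm_cast
    rw [hg_def]
    field_simp
    ring
  -- right-hand side Gram entries
  have Raa : (inner ℂ a a : ℂ) = 1 := by rw [inner_self_eq_norm_sq_to_K, ha]; norm_num
  have Rbb : (inner ℂ b b : ℂ) = 1 := by rw [inner_self_eq_norm_sq_to_K, hb]; norm_num
  have Rcc : (inner ℂ c c : ℂ) = 1 := by rw [inner_self_eq_norm_sq_to_K, hc]; norm_num
  have Rba : (inner ℂ b a : ℂ) = conj p := by rw [hp, inner_conj_symm]
  have Rca : (inner ℂ c a : ℂ) = r := hr.symm
  have Rac : (inner ℂ a c : ℂ) = conj r := by rw [hr, inner_conj_symm]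
  have Rcb : (inner ℂ c b : ℂ) = conj q := by rw [hq, inner_conj_symm]
  -- remaining model Gram entries by conjugation
  have e10 : (inner ℂ b' a' : ℂ) = conj p := by rw [← inner_conj_symm, e01]
  have e20 : (inner ℂ c' a' : ℂ) = r := by
    rw [← inner_conj_symm, e02, Complex.conj_conj]
  have e21 : (inner ℂ c' b' : ℂ) = conj q := by rw [← inner_conj_symm, e12]
  -- the span and its basis
  set V : Submodule ℂ E := Submodule.span ℂ ({a, b, c} : Set E) with hV
  have hmema : a ∈ V := Submodule.subset_span (by simp)
  have hmemb : b ∈ V := Submodule.subset_span (by simp)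
  have hmemc : c ∈ V := Submodule.subset_span (by simp)
  set wv : Fin 3 → V := ![⟨a, hmema⟩, ⟨b, hmemb⟩, ⟨c, hmemc⟩] with hwv
  have hcomp : (V.subtype) ∘ wv = ![a, b, c] := by
    ext i
    fin_cases i <;> rfl
  have hrange : Set.range ![a, b, c] = ({a, b, c} : Set E) := by
    ext z
    simp only [Matrix.range_cons, Matrix.range_empty, Set.mem_insert_iff, Set.mem_union,
      Set.union_empty, Set.union_singleton, Set.mem_singleton_iff]
    exact or_congr Iff.rfl or_comm
  have hli3 : LinearIndependent ℂ ![a, b, c] := by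
    rw [linearIndependent_iff_card_eq_finrank_span, Set.finrank, hrange]
    simpa using hspan.symm
  have hwli : LinearIndependent ℂ wv := by
    apply LinearIndependent.of_comp V.subtype
    rw [hcomp]; exact hli3
  have hcard : Fintype.card (Fin 3) = Module.finrank ℂ V := by
    rw [← hspan]; simp [hV]
  set B : Module.Basis (Fin 3) ℂ V := basisOfLinearIndependentOfCardEqFinrank hwli hcard with hB
  have hBco : ∀ i, ((B i : V) : E) = ![a, b, c] i := by
    intro i
    rw [hB, coe_basisOfLinearIndependentOfCardEqFinrank]
    exact congrFun hcomp i
  set v3 : Fin 3 → EuclideanSpace ℂ (Fin 3) := ![a', b', c'] with hv3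
  set S : V →ₗ[ℂ] EuclideanSpace ℂ (Fin 3) := B.constr ℂ v3 with hS
  have hSB : ∀ i, S (B i) = v3 i := fun i => B.constr_basis ℂ v3 i
  have hgram : ∀ i j, (inner ℂ (v3 i) (v3 j) : ℂ) = (inner ℂ (![a,b,c] i) (![a,b,c] j) : ℂ) := by
    intro i j
    fin_cases i <;> fin_cases j
    · exact e00.trans Raa.symm
    · exact e01.trans hp
    · exact e02.trans Rac.symm
    · exact e10.trans Rba.symm
    · exact e11.trans Rbb.symm
    · exact e12.trans hq
    · exact e20.trans Rca.symm
    · exact e21.trans Rcb.symm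
    · exact e22.trans Rcc.symm
  have hinner : ∀ x y : V, (inner ℂ (S x) (S y) : ℂ) = inner ℂ x y := by
    intro x y
    obtain ⟨kx, rfl⟩ : ∃ k : Fin 3 → ℂ, x = ∑ i, k i • B i := ⟨B.repr x, (B.sum_repr x).symm⟩
    obtain ⟨ky, rfl⟩ : ∃ k : Fin 3 → ℂ, y = ∑ i, k i • B i := ⟨B.repr y, (B.sum_repr y).symm⟩
    simp only [map_sum, map_smul, sum_inner, inner_sum, inner_smul_left, inner_smul_right, hSB]
    refine Finset.sum_congr rfl fun i _ => ?_
    congr 1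
    refine Finset.sum_congr rfl fun j _ => ?_
    congr 1
    rw [Submodule.coe_inner, hBco j, hBco i]
    exact hgram j i
  have hSinj : Function.Injective S := by
    rw [← LinearMap.ker_eq_bot, LinearMap.ker_eq_bot']
    intro m hm
    have h0 := hinner m m
    rw [hm] at h0
    simp only [inner_zero_left] at h0
    exact inner_self_eq_zero.mp h0.symm
  have hrk : Module.finrank ℂ V = Module.finrank ℂ (EuclideanSpace ℂ (Fin 3)) := by
    rw [← hspan]; simp [hV]
  set Seq : V ≃ₗ[ℂ] EuclideanSpace ℂ (Fin 3) := S.linearEquivOfInjective hSinj hrk with hSeq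
  have hSf : ∀ z : EuclideanSpace ℂ (Fin 3), S (Seq.symm z) = z := by
    intro z
    rw [← S.linearEquivOfInjective_apply hSinj hrk, ← hSeq, Seq.apply_symm_apply]
  have hBa : B 0 = ⟨a, hmema⟩ := Subtype.ext (by rw [hBco 0]; rfl)
  have hBb : B 1 = ⟨b, hmemb⟩ := Subtype.ext (by rw [hBco 1]; rfl)
  have hBc : B 2 = ⟨c, hmemc⟩ := Subtype.ext (by rw [hBco 2]; rfl)
  have hSa : S ⟨a, hmema⟩ = a' := by rw [← hBa, hSB 0]; rfl
  have hSb : S ⟨b, hmemb⟩ = b' := by rw [← hBb, hSB 1]; rfl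
  have hSc : S ⟨c, hmemc⟩ = c' := by rw [← hBc, hSB 2]; rfl
  refine ⟨fun i => ((Seq.symm (EuclideanSpace.single i 1) : V) : E), ?_, ?_, ?_, ?_, ?_⟩
  · rw [orthonormal_iff_ite]
    intro i j
    rw [← Submodule.coe_inner, ← hinner, hSf, hSf, EuclideanSpace.inner_single_left]
    simp [EuclideanSpace.single_apply, eq_comm]
  · intro i
    exact SetLike.coe_mem _
  · show (inner ℂ ((Seq.symm (EuclideanSpace.single 0 1) : V) : E) (((⟨a, hmema⟩ : V) : V) : E) : ℂ) = 0
    rw [← Submodule.coe_inner, ← hinner, hSf, hSa, EuclideanSpace.inner_single_left, ha']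
    simp [WithLp.equiv_symm_apply, PiLp.toLp_apply]
  · show (inner ℂ ((Seq.symm (EuclideanSpace.single 1 1) : V) : E) (((⟨b, hmemb⟩ : V) : V) : E) : ℂ) = 0
    rw [← Submodule.coe_inner, ← hinner, hSf, hSb, EuclideanSpace.inner_single_left, hb']
    simp [WithLp.equiv_symm_apply, PiLp.toLp_apply]
  · show (inner ℂ ((Seq.symm (EuclideanSpace.single 2 1) : V) : E) (((⟨c, hmemc⟩ : V) : V) : E) : ℂ) = 0
    rw [← Submodule.coe_inner, ← hinner, hSf, hSc, EuclideanSpace.inner_single_left, hc']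
    simp [WithLp.equiv_symm_apply, PiLp.toLp_apply]
end

section
/- If three unit vectors a, b, c span a 3-dimensional subspace and there is an orthonormal basis {f₁, f₂, f₃} of that subspace with ⟨f₁|a⟩ = ⟨f₂|b⟩ = ⟨f₃|c⟩ = 0, then with x₁ = |⟨a|b⟩|², x₂ = |⟨b|c⟩|², x₃ = |⟨c|a⟩|², we have x₁ + x₂ + x₃ < 1 and (x₁ + x₂ + x₃ − 1)² ≥ 4x₁x₂x₃. -/
open Submodule Module

private lemma expand_aux (E : Type) [NormedAddCommGroup E] [InnerProductSpace ℂ E]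
    (S : Submodule ℂ E) [FiniteDimensional ℂ S] (hS : Module.finrank ℂ S = 3)
    (f : Fin 3 → E) (hf : Orthonormal ℂ f) (hfS : ∀ i, f i ∈ S)
    (v : E) (hv : v ∈ S) : v = ∑ i, (inner ℂ (f i) v : ℂ) • f i := by
  set f' : Fin 3 → S := fun i => ⟨f i, hfS i⟩ with hf'def
  have hf' : Orthonormal ℂ f' := by
    rw [orthonormal_iff_ite] at hf ⊢
    intro i j
    simpa [Submodule.coe_inner] using hf i j
  have hsp : ⊤ ≤ Submodule.span ℂ (Set.range f') := by
    rw [hf'.linearIndependent.span_eq_top_of_card_eq_finrank (by simp [hS])]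
  set B := OrthonormalBasis.mk hf' hsp with hB
  have h := B.sum_repr' (⟨v, hv⟩ : S)
  have hcoe : ∀ i, B i = f' i := by
    intro i; rw [hB, OrthonormalBasis.coe_mk]
  have := congrArg (Subtype.val : S → E) h
  simp only [Submodule.coe_sum, Submodule.coe_smul] at this
  refine this.symm.trans (Finset.sum_congr rfl fun i _ => ?_)
  rw [hcoe]
  simp [f', Submodule.coe_inner]

private lemma rank_helper (E : Type) [NormedAddCommGroup E] [InnerProductSpace ℂ E]
    [FiniteDimensional ℂ E] (a b c u v : E)
    (hau : a ∈ Submodule.span ℂ ({u, v} : Set E))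
    (hbu : b ∈ Submodule.span ℂ ({u, v} : Set E))
    (hcu : c ∈ Submodule.span ℂ ({u, v} : Set E))
    (hspan : Module.finrank ℂ (Submodule.span ℂ ({a, b, c} : Set E)) = 3) : False := by
  classical
  have hle : Submodule.span ℂ ({a, b, c} : Set E) ≤ Submodule.span ℂ ({u, v} : Set E) :=
    Submodule.span_le.2 (by rintro x (rfl | rfl | rfl) <;> assumption)
  have h2 : Module.finrank ℂ (Submodule.span ℂ ({u, v} : Set E)) ≤ 2 := by
    refine (finrank_span_le_card _).trans ?_
    rw [Set.toFinset_insert, Set.toFinset_singleton]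
    exact (Finset.card_insert_le _ _).trans (by simp)
  have := Submodule.finrank_mono hle
  omega

theorem overlap_inequalities_of_pp_incompatible
    (E : Type) [NormedAddCommGroup E] [InnerProductSpace ℂ E] [FiniteDimensional ℂ E]
    (a b c : E) (ha : ‖a‖ = 1) (hb : ‖b‖ = 1) (hc : ‖c‖ = 1)
    (hspan : Module.finrank ℂ (Submodule.span ℂ ({a, b, c} : Set E)) = 3)
    (f : Fin 3 → E) (hf : Orthonormal ℂ f)
    (hfspan : ∀ i, f i ∈ Submodule.span ℂ ({a, b, c} : Set E))
    (hf1 : (inner ℂ (f 0) a : ℂ) = 0) (hf2 : (inner ℂ (f 1) b : ℂ) = 0)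
    (hf3 : (inner ℂ (f 2) c : ℂ) = 0) :
    ‖(inner ℂ a b : ℂ)‖^2 + ‖(inner ℂ b c : ℂ)‖^2 + ‖(inner ℂ c a : ℂ)‖^2 < 1 ∧
    (‖(inner ℂ a b : ℂ)‖^2 + ‖(inner ℂ b c : ℂ)‖^2 + ‖(inner ℂ c a : ℂ)‖^2 - 1)^2
      ≥ 4 * ‖(inner ℂ a b : ℂ)‖^2 * ‖(inner ℂ b c : ℂ)‖^2 * ‖(inner ℂ c a : ℂ)‖^2 := by
  classical
  set S := Submodule.span ℂ ({a, b, c} : Set E) with hSdef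
  have haS : a ∈ S := Submodule.subset_span (by simp)
  have hbS : b ∈ S := Submodule.subset_span (by simp)
  have hcS : c ∈ S := Submodule.subset_span (by simp)
  set α : Fin 3 → ℂ := fun i => inner ℂ (f i) a with hαdef
  set β : Fin 3 → ℂ := fun i => inner ℂ (f i) b with hβdef
  set γ : Fin 3 → ℂ := fun i => inner ℂ (f i) c with hγdef
  have hA : a = ∑ i, α i • f i := expand_aux E S hspan f hf hfspan a haS
  have hB : b = ∑ i, β i • f i := expand_aux E S hspan f hf hfspan b hbS
  have hC : c = ∑ i, γ i • f i := expand_aux E S hspan f hf hfspan c hcS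
  have hα0 : α 0 = 0 := hf1
  have hβ1 : β 1 = 0 := hf2
  have hγ2 : γ 2 = 0 := hf3
  have hA' : a = α 1 • f 1 + α 2 • f 2 := by
    rw [hA, Fin.sum_univ_three, hα0]; simp
  have hB' : b = β 0 • f 0 + β 2 • f 2 := by
    rw [hB, Fin.sum_univ_three, hβ1]; simp
  have hC' : c = γ 0 • f 0 + γ 1 • f 1 := by
    rw [hC, Fin.sum_univ_three, hγ2]; simp
  -- inner ℂ products in coordinates
  have hab : (inner ℂ a b : ℂ) = (starRingEnd ℂ) (α 2) * β 2 := by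
    conv_lhs => rw [hA, hB]
    rw [hf.inner_sum, Fin.sum_univ_three, hα0, hβ1]
    simp
  have hbc : (inner ℂ b c : ℂ) = (starRingEnd ℂ) (β 0) * γ 0 := by
    conv_lhs => rw [hB, hC]
    rw [hf.inner_sum, Fin.sum_univ_three, hβ1, hγ2]
    simp
  have hca : (inner ℂ c a : ℂ) = (starRingEnd ℂ) (γ 1) * α 1 := by
    conv_lhs => rw [hC, hA]
    rw [hf.inner_sum, Fin.sum_univ_three, hγ2, hα0]
    simp
  have key : ∀ z : ℂ, (starRingEnd ℂ) z * z = ((‖z‖^2 : ℝ) : ℂ) := fun z => by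
    rw [mul_comm, Complex.mul_conj, Complex.normSq_eq_norm_sq]
  -- norm equations
  have norm_eq : ∀ v : E, ‖v‖ = 1 → (inner ℂ v v : ℂ) = 1 := by
    intro v hv
    rw [inner_self_eq_norm_sq_to_K, hv]
    norm_num
  have haa : ‖α 1‖^2 + ‖α 2‖^2 = 1 := by
    have h1 : (inner ℂ a a : ℂ) = (starRingEnd ℂ) (α 1) * α 1 + (starRingEnd ℂ) (α 2) * α 2 := by
      conv_lhs => rw [hA]
      rw [hf.inner_sum, Fin.sum_univ_three, hα0]
      simp
    rw [norm_eq a ha, key, key] at h1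
    exact_mod_cast h1.symm
  have hbb : ‖β 0‖^2 + ‖β 2‖^2 = 1 := by
    have h1 : (inner ℂ b b : ℂ) = (starRingEnd ℂ) (β 0) * β 0 + (starRingEnd ℂ) (β 2) * β 2 := by
      conv_lhs => rw [hB]
      rw [hf.inner_sum, Fin.sum_univ_three, hβ1]
      simp
    rw [norm_eq b hb, key, key] at h1
    exact_mod_cast h1.symm
  have hcc : ‖γ 0‖^2 + ‖γ 1‖^2 = 1 := by
    have h1 : (inner ℂ c c : ℂ) = (starRingEnd ℂ) (γ 0) * γ 0 + (starRingEnd ℂ) (γ 1) * γ 1 := by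
      conv_lhs => rw [hC]
      rw [hf.inner_sum, Fin.sum_univ_three, hγ2]
      simp
    rw [norm_eq c hc, key, key] at h1
    exact_mod_cast h1.symm
  -- norms of overlaps
  have nab : ‖(inner ℂ a b : ℂ)‖^2 = ‖α 2‖^2 * ‖β 2‖^2 := by
    rw [hab, norm_mul, RCLike.norm_conj]; ring
  have nbc : ‖(inner ℂ b c : ℂ)‖^2 = ‖β 0‖^2 * ‖γ 0‖^2 := by
    rw [hbc, norm_mul, RCLike.norm_conj]; ring
  have nca : ‖(inner ℂ c a : ℂ)‖^2 = ‖γ 1‖^2 * ‖α 1‖^2 := by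
    rw [hca, norm_mul, RCLike.norm_conj]; ring
  -- strict positivity of A + B
  have keypos : 0 < ‖α 1‖^2 * ‖β 2‖^2 * ‖γ 0‖^2 + ‖α 2‖^2 * ‖β 0‖^2 * ‖γ 1‖^2 := by
    rcases lt_or_eq_of_le (by positivity :
        (0:ℝ) ≤ ‖α 1‖^2 * ‖β 2‖^2 * ‖γ 0‖^2 + ‖α 2‖^2 * ‖β 0‖^2 * ‖γ 1‖^2) with h | h
    · exact h
    exfalso
    have nA : (0:ℝ) ≤ ‖α 1‖^2 * ‖β 2‖^2 * ‖γ 0‖^2 := by positivity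
    have nB : (0:ℝ) ≤ ‖α 2‖^2 * ‖β 0‖^2 * ‖γ 1‖^2 := by positivity
    have h1 : ‖α 1‖^2 * ‖β 2‖^2 * ‖γ 0‖^2 = 0 := by linarith
    have h2 : ‖α 2‖^2 * ‖β 0‖^2 * ‖γ 1‖^2 = 0 := by linarith
    have e1 : α 1 = 0 ∨ β 2 = 0 ∨ γ 0 = 0 := by
      rcases mul_eq_zero.1 h1 with h | h
      · rcases mul_eq_zero.1 h with h | h
        · exact Or.inl (by simpa using pow_eq_zero_iff (n := 2) (by norm_num) |>.1 h |> norm_eq_zero.1)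
        · exact Or.inr (Or.inl (by simpa using pow_eq_zero_iff (n := 2) (by norm_num) |>.1 h |> norm_eq_zero.1))
      · exact Or.inr (Or.inr (by simpa using pow_eq_zero_iff (n := 2) (by norm_num) |>.1 h |> norm_eq_zero.1))
    have e2 : α 2 = 0 ∨ β 0 = 0 ∨ γ 1 = 0 := by
      rcases mul_eq_zero.1 h2 with h | h
      · rcases mul_eq_zero.1 h with h | h
        · exact Or.inl (by simpa using pow_eq_zero_iff (n := 2) (by norm_num) |>.1 h |> norm_eq_zero.1)
        · exact Or.inr (Or.inl (by simpa using pow_eq_zero_iff (n := 2) (by norm_num) |>.1 h |> norm_eq_zero.1))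
      · exact Or.inr (Or.inr (by simpa using pow_eq_zero_iff (n := 2) (by norm_num) |>.1 h |> norm_eq_zero.1))
    rcases e1 with z1 | z1 | z1 <;> rcases e2 with z2 | z2 | z2
    · -- α 1 = 0, α 2 = 0 : a = 0
      have : a = 0 := by rw [hA', z1, z2]; simp
      rw [this] at ha; simp at ha
    · -- α 1 = 0, β 0 = 0 : a, b ∈ span f 2; use {f 2, c}
      refine rank_helper E a b c (f 2) c ?_ ?_ ?_ hspan
      · exact Submodule.mem_span_pair.2 ⟨α 2, 0, by rw [hA', z1]; simp⟩
      · exact Submodule.mem_span_pair.2 ⟨β 2, 0, by rw [hB', z2]; simp⟩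
      · exact Submodule.subset_span (by simp)
    · -- α 1 = 0, γ 1 = 0 : all in span {f 0, f 2}
      refine rank_helper E a b c (f 0) (f 2) ?_ ?_ ?_ hspan
      · exact Submodule.mem_span_pair.2 ⟨0, α 2, by rw [hA', z1]; simp⟩
      · exact Submodule.mem_span_pair.2 ⟨β 0, β 2, by rw [hB']⟩
      · exact Submodule.mem_span_pair.2 ⟨γ 0, 0, by rw [hC', z2]; simp⟩
    · -- β 2 = 0, α 2 = 0 : all in span {f 0, f 1}
      refine rank_helper E a b c (f 0) (f 1) ?_ ?_ ?_ hspan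
      · exact Submodule.mem_span_pair.2 ⟨0, α 1, by rw [hA', z2]; simp⟩
      · exact Submodule.mem_span_pair.2 ⟨β 0, 0, by rw [hB', z1]; simp⟩
      · exact Submodule.mem_span_pair.2 ⟨γ 0, γ 1, by rw [hC']⟩
    · -- β 2 = 0, β 0 = 0 : b = 0
      have : b = 0 := by rw [hB', z1, z2]; simp
      rw [this] at hb; simp at hb
    · -- β 2 = 0, γ 1 = 0 : b, c ∈ span f 0; use {f 0, a}
      refine rank_helper E a b c (f 0) a ?_ ?_ ?_ hspan
      · exact Submodule.subset_span (by simp)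
      · exact Submodule.mem_span_pair.2 ⟨β 0, 0, by rw [hB', z1]; simp⟩
      · exact Submodule.mem_span_pair.2 ⟨γ 0, 0, by rw [hC', z2]; simp⟩
    · -- γ 0 = 0, α 2 = 0 : a, c ∈ span f 1; use {f 1, b}
      refine rank_helper E a b c (f 1) b ?_ ?_ ?_ hspan
      · exact Submodule.mem_span_pair.2 ⟨α 1, 0, by rw [hA', z2]; simp⟩
      · exact Submodule.subset_span (by simp)
      · exact Submodule.mem_span_pair.2 ⟨γ 1, 0, by rw [hC', z1]; simp⟩
    · -- γ 0 = 0, β 0 = 0 : all in span {f 1, f 2}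
      refine rank_helper E a b c (f 1) (f 2) ?_ ?_ ?_ hspan
      · exact Submodule.mem_span_pair.2 ⟨α 1, α 2, by rw [hA']⟩
      · exact Submodule.mem_span_pair.2 ⟨0, β 2, by rw [hB', z2]; simp⟩
      · exact Submodule.mem_span_pair.2 ⟨γ 1, 0, by rw [hC', z1]; simp⟩
    · -- γ 0 = 0, γ 1 = 0 : c = 0
      have : c = 0 := by rw [hC', z1, z2]; simp
      rw [this] at hc; simp at hc
  rw [nab, nbc, nca]
  have e1 : ‖α 2‖^2 = 1 - ‖α 1‖^2 := by linarith
  have e2 : ‖β 2‖^2 = 1 - ‖β 0‖^2 := by linarith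
  have e3 : ‖γ 1‖^2 = 1 - ‖γ 0‖^2 := by linarith
  rw [e1, e2, e3] at keypos ⊢
  set p := ‖α 1‖^2 with hp
  set q := ‖β 0‖^2 with hq
  set r := ‖γ 0‖^2 with hr
  have hid : (1 - p) * (1 - q) + q * r + (1 - r) * p - 1
      = -(p * (1 - q) * r + (1 - p) * q * (1 - r)) := by ring
  constructor
  · nlinarith [keypos]
  · have hid2 : ((1 - p) * (1 - q) + q * r + (1 - r) * p - 1)^2
        - 4 * ((1 - p) * (1 - q)) * (q * r) * ((1 - r) * p)
        = (p * (1 - q) * r - (1 - p) * q * (1 - r))^2 := by ring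
    have := sq_nonneg (p * (1 - q) * r - (1 - p) * q * (1 - r))
    linarith
end

section
/- Let μ₁, μ₂, μ₃ be probability distributions on a finite set Λ and ξ₁, ξ₂, ξ₃, ξ₄ : Λ → [0,1] with ξ₁+ξ₂+ξ₃+ξ₄ = 1 pointwise. If ∑_λ ξ₁(λ)μ₁(λ) = ∑_λ ξ₂(λ)μ₂(λ) = ∑_λ ξ₃(λ)μ₃(λ) = 0 and ∑_λ ξ₄(λ)μᵢ(λ) = 0 for i = 1,2,3, then there is no λ ∈ Λ with μ₁(λ) > 0, μ₂(λ) > 0 and μ₃(λ) > 0; equivalently ∑_λ min(μ₁(λ), μ₂(λ), μ₃(λ)) = 0. -/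
theorem triple_support_empty
    (Λ : Type) [Fintype Λ]
    (μ₁ μ₂ μ₃ : Λ → ℝ) (ξ₁ ξ₂ ξ₃ ξ₄ : Λ → ℝ)
    (hμ₁ : ∀ l, 0 ≤ μ₁ l) (hμ₂ : ∀ l, 0 ≤ μ₂ l) (hμ₃ : ∀ l, 0 ≤ μ₃ l)
    (hμ₁1 : ∑ l, μ₁ l = 1) (hμ₂1 : ∑ l, μ₂ l = 1) (hμ₃1 : ∑ l, μ₃ l = 1)
    (hξ₁ : ∀ l, 0 ≤ ξ₁ l) (hξ₂ : ∀ l, 0 ≤ ξ₂ l)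
    (hξ₃ : ∀ l, 0 ≤ ξ₃ l) (hξ₄ : ∀ l, 0 ≤ ξ₄ l)
    (hsum : ∀ l, ξ₁ l + ξ₂ l + ξ₃ l + ξ₄ l = 1)
    (h1 : ∑ l, ξ₁ l * μ₁ l = 0) (h2 : ∑ l, ξ₂ l * μ₂ l = 0)
    (h3 : ∑ l, ξ₃ l * μ₃ l = 0)
    (h4 : ∀ i : Fin 3, ∑ l, ξ₄ l * ![μ₁, μ₂, μ₃] i l = 0) :
    (¬ ∃ l, 0 < μ₁ l ∧ 0 < μ₂ l ∧ 0 < μ₃ l) ∧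
    ∑ l, min (μ₁ l) (min (μ₂ l) (μ₃ l)) = 0 := by
  have e1 : ∀ l, ξ₁ l * μ₁ l = 0 := by
    have := (Finset.sum_eq_zero_iff_of_nonneg (fun l _ =>
      mul_nonneg (hξ₁ l) (hμ₁ l))).mp h1
    exact fun l => this l (Finset.mem_univ l)
  have e2 : ∀ l, ξ₂ l * μ₂ l = 0 := by
    have := (Finset.sum_eq_zero_iff_of_nonneg (fun l _ =>
      mul_nonneg (hξ₂ l) (hμ₂ l))).mp h2
    exact fun l => this l (Finset.mem_univ l)
  have e3 : ∀ l, ξ₃ l * μ₃ l = 0 := by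
    have := (Finset.sum_eq_zero_iff_of_nonneg (fun l _ =>
      mul_nonneg (hξ₃ l) (hμ₃ l))).mp h3
    exact fun l => this l (Finset.mem_univ l)
  have e4 : ∀ l, ξ₄ l * μ₁ l = 0 := by
    have h := h4 0
    simp only [Matrix.cons_val_zero] at h
    have := (Finset.sum_eq_zero_iff_of_nonneg (fun l _ =>
      mul_nonneg (hξ₄ l) (hμ₁ l))).mp h
    exact fun l => this l (Finset.mem_univ l)
  have key : ¬ ∃ l, 0 < μ₁ l ∧ 0 < μ₂ l ∧ 0 < μ₃ l := by
    rintro ⟨l, p1, p2, p3⟩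
    have z1 : ξ₁ l = 0 := by
      rcases mul_eq_zero.mp (e1 l) with h | h
      · exact h
      · exact absurd h (ne_of_gt p1)
    have z2 : ξ₂ l = 0 := by
      rcases mul_eq_zero.mp (e2 l) with h | h
      · exact h
      · exact absurd h (ne_of_gt p2)
    have z3 : ξ₃ l = 0 := by
      rcases mul_eq_zero.mp (e3 l) with h | h
      · exact h
      · exact absurd h (ne_of_gt p3)
    have z4 : ξ₄ l = 0 := by
      rcases mul_eq_zero.mp (e4 l) with h | h
      · exact h
      · exact absurd h (ne_of_gt p1)
    have := hsum l
    rw [z1, z2, z3, z4] at this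
    norm_num at this
  refine ⟨key, Finset.sum_eq_zero fun l _ => ?_⟩
  by_contra hne
  have hpos : 0 < min (μ₁ l) (min (μ₂ l) (μ₃ l)) :=
    lt_of_le_of_ne (le_min (hμ₁ l) (le_min (hμ₂ l) (hμ₃ l))) (Ne.symm hne)
  rw [lt_min_iff, lt_min_iff] at hpos
  exact key ⟨l, hpos.1, hpos.2.1, hpos.2.2⟩
end

section
/- Let Λ be a finite set, μ_c a probability distribution on Λ, and let S^γ_i ⊆ Λ for γ, i ∈ {1,…,d} be sets such that: (i) for each γ and i ≠ j, S^γ_i ∩ S^γ_j = ∅; (ii) for α ≠ β and any i, j, S^α_i ∩ S^β_j ∩ supp(μ_c) = ∅; (iii) for all γ, i, ∑_{λ ∈ S^γ_i} μ_c(λ) ≥ k(1 − √(1 − 1/d)). Then k ≤ (1/d)(1 + √(1 − 1/d)), hence k < 2/d. -/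
theorem combinatorial_core_bound
    (Λ : Type) [Fintype Λ] [DecidableEq Λ]
    (d : ℕ) (hd : 1 ≤ d) (k : ℝ)
    (μc : Λ → ℝ) (hμc : ∀ l, 0 ≤ μc l) (hμc1 : ∑ l, μc l = 1)
    (S : Fin d → Fin d → Finset Λ)
    (hdisj : ∀ γ : Fin d, ∀ i j : Fin d, i ≠ j → S γ i ∩ S γ j = ∅)
    (htriple : ∀ α β : Fin d, α ≠ β → ∀ i j : Fin d,
      ∀ l ∈ S α i ∩ S β j, ¬ (0 < μc l))
    (hlower : ∀ γ i : Fin d, ∑ l ∈ S γ i, μc l ≥ k * (1 - Real.sqrt (1 - 1 / d))) :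
    k ≤ (1 / d) * (1 + Real.sqrt (1 - 1 / d)) ∧ k < 2 / d := by
  set s := Real.sqrt (1 - 1 / d) with hs
  have hD : (1:ℝ) ≤ (d:ℝ) := by exact_mod_cast hd
  have hD0 : (0:ℝ) < (d:ℝ) := by linarith
  have hx0 : (0:ℝ) ≤ 1 - 1 / (d:ℝ) := by
    have : 1 / (d:ℝ) ≤ 1 := by
      rw [div_le_one hD0]; exact hD
    linarith
  have hx1 : (1:ℝ) - 1 / (d:ℝ) < 1 := by
    have : 0 < 1 / (d:ℝ) := by positivity
    linarith
  have hs0 : 0 ≤ s := Real.sqrt_nonneg _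
  have hs0' : 0 ≤ s := Real.sqrt_nonneg _
  have hssq' : s ^ 2 = 1 - 1 / (d:ℝ) := by rw [hs, Real.sq_sqrt hx0]
  have hs1 : s < 1 := by nlinarith [hssq', hx1, hs0']
  have hssq : s ^ 2 = 1 - 1 / (d:ℝ) := by
    rw [hs, Real.sq_sqrt hx0]
  -- total sum over all pairs is at most 1
  have hsum : ∑ p : Fin d × Fin d, ∑ l ∈ S p.1 p.2, μc l ≤ 1 := by
    have h1 : ∀ p : Fin d × Fin d, ∑ l ∈ S p.1 p.2, μc l
        = ∑ l : Λ, if l ∈ S p.1 p.2 then μc l else 0 := by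
      intro p; rw [Finset.sum_ite_mem, Finset.univ_inter]
    simp_rw [h1]
    rw [Finset.sum_comm, ← hμc1]
    apply Finset.sum_le_sum
    intro l _
    rcases lt_or_eq_of_le (hμc l) with hpos | hzero
    · have hcard : (Finset.univ.filter (fun p : Fin d × Fin d => l ∈ S p.1 p.2)).card ≤ 1 := by
        apply Finset.card_le_one.mpr
        intro p hp q hq
        simp only [Finset.mem_filter] at hp hq
        by_cases h1 : p.1 = q.1
        · by_cases h2 : p.2 = q.2
          · exact Prod.ext h1 h2
          · exfalso
            have hemp := hdisj p.1 p.2 q.2 h2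
            have hl : l ∈ S p.1 p.2 ∩ S p.1 q.2 :=
              Finset.mem_inter.mpr ⟨hp.2, h1 ▸ hq.2⟩
            rw [hemp] at hl; exact absurd hl (Finset.notMem_empty l)
        · exact absurd hpos (htriple p.1 q.1 h1 p.2 q.2 l
            (Finset.mem_inter.mpr ⟨hp.2, hq.2⟩))
      calc ∑ p : Fin d × Fin d, (if l ∈ S p.1 p.2 then μc l else 0)
          = ∑ _p ∈ Finset.univ.filter (fun p : Fin d × Fin d => l ∈ S p.1 p.2), μc l :=
            (Finset.sum_filter _ _).symm
        _ = (Finset.univ.filter (fun p : Fin d × Fin d => l ∈ S p.1 p.2)).card * μc l := by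
            rw [Finset.sum_const, nsmul_eq_mul]
        _ ≤ 1 * μc l := by
            apply mul_le_mul_of_nonneg_right _ (hμc l)
            exact_mod_cast hcard
        _ = μc l := one_mul _
    · simp [← hzero]
  -- lower bound on the total sum
  have hlow : (d:ℝ) ^ 2 * (k * (1 - s)) ≤ ∑ p : Fin d × Fin d, ∑ l ∈ S p.1 p.2, μc l := by
    have : ∑ _p : Fin d × Fin d, k * (1 - s) ≤ ∑ p : Fin d × Fin d, ∑ l ∈ S p.1 p.2, μc l :=
      Finset.sum_le_sum (fun p _ => hlower p.1 p.2)
    calc (d:ℝ) ^ 2 * (k * (1 - s)) = ∑ _p : Fin d × Fin d, k * (1 - s) := by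
          rw [Finset.sum_const, nsmul_eq_mul]
          simp [sq]
      _ ≤ _ := this
  have key : (d:ℝ) ^ 2 * (k * (1 - s)) ≤ 1 := le_trans hlow hsum
  have h2 : (1 - s) * (1 + s) = 1 / (d:ℝ) := by nlinarith [hssq]
  have hmain : k ≤ (1 / (d:ℝ)) * (1 + s) := by
    have hmul : (d:ℝ) ^ 2 * (k * (1 - s)) * (1 + s) ≤ 1 * (1 + s) :=
      mul_le_mul_of_nonneg_right key (by linarith)
    have hexp : (d:ℝ) ^ 2 * (k * (1 - s)) * (1 + s) = (d:ℝ) ^ 2 * k * (1 / (d:ℝ)) := by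
      rw [← h2]; ring
    rw [hexp, one_mul] at hmul
    have heq : (d:ℝ) ^ 2 * k * (1 / (d:ℝ)) = (d:ℝ) * k := by field_simp
    rw [heq] at hmul
    have hk : k ≤ (1 + s) / (d:ℝ) := (le_div_iff₀ hD0).mpr (by linarith)
    have he : (1 + s) / (d:ℝ) = (1 / (d:ℝ)) * (1 + s) := by ring
    linarith [he ▸ hk]
  refine ⟨hmain, ?_⟩
  have : (1 / (d:ℝ)) * (1 + s) < (1 / (d:ℝ)) * 2 := by
    apply mul_lt_mul_of_pos_left (by linarith) (by positivity)
  calc k ≤ (1 / (d:ℝ)) * (1 + s) := hmain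
    _ < (1 / (d:ℝ)) * 2 := this
    _ = 2 / (d:ℝ) := by ring
end

section
/- Let Λ be a finite set, μ_c and μ^α_i (α, i ∈ {1,…,d}) probability distributions on Λ. Then ∑_{α,i} ∑_λ min(μ_c(λ), μ^α_i(λ)) ≤ 1 + ∑_{α<β} ∑_{i,j} ∑_λ min(μ_c(λ), μ^α_i(λ), μ^β_j(λ)) + ∑_α ∑_{i<j} ∑_λ min(μ^α_i(λ), μ^α_j(λ)). -/
open Finset

/-- Bonferroni-type bound for a family of nested "intervals": if each `y p` lies in `[0, a]`,
then the sum of the `y p` is at most `a` plus the sum of pairwise minima (each unordered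
pair counted once via a trichotomous relation `r`). -/
lemma bonferroni_key {ι : Type*} [Fintype ι] [DecidableEq ι]
    (r : ι → ι → Prop) [DecidableRel r]
    (htri : ∀ p q : ι, p ≠ q → r p q ∨ r q p)
    (a : ℝ) (ha : 0 ≤ a) (y : ι → ℝ) (hy0 : ∀ p, 0 ≤ y p) (hya : ∀ p, y p ≤ a) :
    ∑ p, y p ≤ a + ∑ p, ∑ q, if r p q then min (y p) (y q) else 0 := by
  classical
  rcases isEmpty_or_nonempty ι with h | h
  · simpa using ha
  · obtain ⟨p₀, -, hp₀⟩ := Finset.exists_max_image Finset.univ y Finset.univ_nonempty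
    set F : ι × ι → ℝ := fun x => if r x.1 x.2 then min (y x.1) (y x.2) else 0 with hF
    set g : ι → ι × ι := fun p => if r p p₀ then (p, p₀) else (p₀, p) with hg
    have hFnonneg : ∀ x : ι × ι, 0 ≤ F x := by
      intro x
      simp only [hF]
      split_ifs
      · exact le_min (hy0 _) (hy0 _)
      · exact le_refl 0
    have hFg : ∀ p ∈ Finset.univ.erase p₀, F (g p) = min (y p) (y p₀) := by
      intro p hp
      have hne : p ≠ p₀ := Finset.ne_of_mem_erase hp
      simp only [hg]
      by_cases hr : r p p₀
      · simp [hF, hr]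
      · have hr' : r p₀ p := (htri p p₀ hne).resolve_left hr
        simp [hF, hr, hr', min_comm]
    have hinj : ∀ p ∈ Finset.univ.erase p₀, ∀ q ∈ Finset.univ.erase p₀,
        g p = g q → p = q := by
      intro p hp q hq hpq
      have hpne : p ≠ p₀ := Finset.ne_of_mem_erase hp
      have hqne : q ≠ p₀ := Finset.ne_of_mem_erase hq
      simp only [hg] at hpq
      split_ifs at hpq <;> simp_all [Prod.ext_iff]
    have step1 : ∑ p, y p = y p₀ + ∑ p ∈ Finset.univ.erase p₀, y p :=
      (Finset.add_sum_erase _ _ (Finset.mem_univ p₀)).symm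
    have step2 : ∑ p ∈ Finset.univ.erase p₀, y p
        = ∑ p ∈ Finset.univ.erase p₀, min (y p) (y p₀) := by
      refine Finset.sum_congr rfl fun p _ => ?_
      exact (min_eq_left (hp₀ p (Finset.mem_univ p))).symm
    have step3 : ∑ p ∈ Finset.univ.erase p₀, min (y p) (y p₀)
        ≤ ∑ x ∈ Finset.univ ×ˢ Finset.univ, F x := by
      calc ∑ p ∈ Finset.univ.erase p₀, min (y p) (y p₀)
          = ∑ p ∈ Finset.univ.erase p₀, F (g p) :=
            (Finset.sum_congr rfl fun p hp => (hFg p hp).symm)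
        _ = ∑ x ∈ (Finset.univ.erase p₀).image g, F x := (Finset.sum_image hinj).symm
        _ ≤ ∑ x ∈ Finset.univ ×ˢ Finset.univ, F x := by
            apply Finset.sum_le_sum_of_subset_of_nonneg
            · intro x _; simp
            · intro x _ _; exact hFnonneg x
    have step4 : ∑ x ∈ Finset.univ ×ˢ Finset.univ, F x
        = ∑ p, ∑ q, if r p q then min (y p) (y q) else 0 := by
      rw [Finset.sum_product]
    calc ∑ p, y p = y p₀ + ∑ p ∈ Finset.univ.erase p₀, y p := step1
      _ ≤ a + ∑ p, ∑ q, if r p q then min (y p) (y q) else 0 := by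
          rw [step2]
          exact add_le_add (hya p₀) (step4 ▸ step3)


lemma bonferroni_perpoint (d : ℕ) (a : ℝ) (ha : 0 ≤ a)
    (b : Fin d → Fin d → ℝ) (hb : ∀ α i, 0 ≤ b α i) :
    ∑ α : Fin d, ∑ i : Fin d, min a (b α i)
      ≤ a + (∑ α : Fin d, ∑ β ∈ Finset.Ioi α, ∑ i : Fin d, ∑ j : Fin d,
          min a (min (b α i) (b β j))
        + ∑ α : Fin d, ∑ i : Fin d, ∑ j ∈ Finset.Ioi i, min (b α i) (b α j)) := by
  classical
  have htri : ∀ p q : Fin d × Fin d, p ≠ q →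
      (p.1 < q.1 ∨ (p.1 = q.1 ∧ p.2 < q.2)) ∨ (q.1 < p.1 ∨ (q.1 = p.1 ∧ q.2 < p.2)) := by
    intro p q hpq
    rcases lt_trichotomy p.1 q.1 with h | h | h
    · exact Or.inl (Or.inl h)
    · rcases lt_trichotomy p.2 q.2 with h2 | h2 | h2
      · exact Or.inl (Or.inr ⟨h, h2⟩)
      · exact absurd (Prod.ext h h2) hpq
      · exact Or.inr (Or.inr ⟨h.symm, h2⟩)
    · exact Or.inr (Or.inl h)
  have key := bonferroni_key (ι := Fin d × Fin d)
      (fun p q => p.1 < q.1 ∨ (p.1 = q.1 ∧ p.2 < q.2)) htri a ha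
      (fun p => min a (b p.1 p.2))
      (fun p => le_min ha (hb _ _)) (fun p => min_le_left _ _)
  have hmm : ∀ (x y : ℝ), min (min a x) (min a y) = min a (min x y) := by
    intro x y
    rw [inf_inf_inf_comm, min_self]
  have hmono : (∑ p : Fin d × Fin d, ∑ q : Fin d × Fin d,
        if p.1 < q.1 ∨ (p.1 = q.1 ∧ p.2 < q.2) then
          min (min a (b p.1 p.2)) (min a (b q.1 q.2)) else 0)
      ≤ ∑ p : Fin d × Fin d, ∑ q : Fin d × Fin d,
        ((if p.1 < q.1 then min a (min (b p.1 p.2) (b q.1 q.2)) else 0)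
          + (if p.1 = q.1 ∧ p.2 < q.2 then min (b p.1 p.2) (b q.1 q.2) else 0)) := by
    refine Finset.sum_le_sum fun p _ => Finset.sum_le_sum fun q _ => ?_
    have h0a : (0:ℝ) ≤ min a (min (b p.1 p.2) (b q.1 q.2)) :=
      le_min ha (le_min (hb _ _) (hb _ _))
    have h0b : (0:ℝ) ≤ min (b p.1 p.2) (b q.1 q.2) := le_min (hb _ _) (hb _ _)
    by_cases h1 : p.1 < q.1
    · rw [if_pos (Or.inl h1), if_pos h1, hmm]
      have h2 : (0:ℝ) ≤ (if p.1 = q.1 ∧ p.2 < q.2 then min (b p.1 p.2) (b q.1 q.2) else 0) := by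
        split_ifs
        · exact h0b
        · exact le_refl 0
      linarith
    · rw [if_neg h1]
      by_cases h2 : p.1 = q.1 ∧ p.2 < q.2
      · rw [if_pos (Or.inr h2), if_pos h2, zero_add]
        exact min_le_min (min_le_right _ _) (min_le_right _ _)
      · rw [if_neg h2, if_neg (by tauto : ¬(p.1 < q.1 ∨ (p.1 = q.1 ∧ p.2 < q.2)))]
        simp
  have hpull : ∀ (c : Prop) [Decidable c] (g : Fin d → ℝ),
      (∑ x : Fin d, if c then g x else 0) = if c then ∑ x : Fin d, g x else 0 := by
    intro c _ g
    split_ifs <;> simp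
  have hA : (∑ p : Fin d × Fin d, ∑ q : Fin d × Fin d,
        if p.1 < q.1 then min a (min (b p.1 p.2) (b q.1 q.2)) else 0)
      = ∑ α : Fin d, ∑ β ∈ Finset.Ioi α, ∑ i : Fin d, ∑ j : Fin d,
          min a (min (b α i) (b β j)) := by
    simp only [Fintype.sum_prod_type]
    refine Finset.sum_congr rfl fun α _ => ?_
    rw [Finset.sum_comm]
    rw [← Finset.filter_lt_eq_Ioi, Finset.sum_filter]
    refine Finset.sum_congr rfl fun β _ => ?_
    simp only [hpull]
  have hB : (∑ p : Fin d × Fin d, ∑ q : Fin d × Fin d,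
        if p.1 = q.1 ∧ p.2 < q.2 then min (b p.1 p.2) (b q.1 q.2) else 0)
      = ∑ α : Fin d, ∑ i : Fin d, ∑ j ∈ Finset.Ioi i, min (b α i) (b α j) := by
    simp only [Fintype.sum_prod_type, ite_and]
    refine Finset.sum_congr rfl fun α _ => Finset.sum_congr rfl fun i _ => ?_
    simp only [hpull]
    rw [Finset.sum_ite_eq]
    simp only [Finset.mem_univ, if_true]
    rw [← Finset.filter_lt_eq_Ioi, Finset.sum_filter]
  calc ∑ α : Fin d, ∑ i : Fin d, min a (b α i)
      = ∑ p : Fin d × Fin d, min a (b p.1 p.2) :=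
        (Fintype.sum_prod_type (fun p : Fin d × Fin d => min a (b p.1 p.2))).symm
    _ ≤ a + ∑ p : Fin d × Fin d, ∑ q : Fin d × Fin d,
        if p.1 < q.1 ∨ (p.1 = q.1 ∧ p.2 < q.2) then
          min (min a (b p.1 p.2)) (min a (b q.1 q.2)) else 0 := key
    _ ≤ a + ∑ p : Fin d × Fin d, ∑ q : Fin d × Fin d,
        ((if p.1 < q.1 then min a (min (b p.1 p.2) (b q.1 q.2)) else 0)
          + (if p.1 = q.1 ∧ p.2 < q.2 then min (b p.1 p.2) (b q.1 q.2) else 0)) :=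
        add_le_add_right hmono a
    _ = a + ((∑ p : Fin d × Fin d, ∑ q : Fin d × Fin d,
          if p.1 < q.1 then min a (min (b p.1 p.2) (b q.1 q.2)) else 0)
        + ∑ p : Fin d × Fin d, ∑ q : Fin d × Fin d,
          if p.1 = q.1 ∧ p.2 < q.2 then min (b p.1 p.2) (b q.1 q.2) else 0) := by
        simp only [Finset.sum_add_distrib]
    _ = a + (∑ α : Fin d, ∑ β ∈ Finset.Ioi α, ∑ i : Fin d, ∑ j : Fin d,
          min a (min (b α i) (b β j))
        + ∑ α : Fin d, ∑ i : Fin d, ∑ j ∈ Finset.Ioi i, min (b α i) (b α j)) := by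
        rw [hA, hB]

theorem bonferroni_overlap_inequality
    (Λ : Type) [Fintype Λ] (d : ℕ)
    (μc : Λ → ℝ) (μ : Fin d → Fin d → Λ → ℝ)
    (hμc : ∀ l, 0 ≤ μc l) (hμc1 : ∑ l, μc l = 1)
    (hμ : ∀ α i l, 0 ≤ μ α i l) (hμ1 : ∀ α i, ∑ l, μ α i l = 1) :
    ∑ α : Fin d, ∑ i : Fin d, ∑ l, min (μc l) (μ α i l)
      ≤ 1
        + ∑ α : Fin d, ∑ β ∈ Finset.Ioi α, ∑ i : Fin d, ∑ j : Fin d,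
            ∑ l, min (μc l) (min (μ α i l) (μ β j l))
        + ∑ α : Fin d, ∑ i : Fin d, ∑ j ∈ Finset.Ioi i,
            ∑ l, min (μ α i l) (μ α j l) := by
  classical
  have pull : ∀ {A : Type} (s : Finset A) (f : A → Λ → ℝ),
      (∑ x ∈ s, ∑ l, f x l) = ∑ l, ∑ x ∈ s, f x l := fun s f => Finset.sum_comm
  simp only [pull]
  rw [← hμc1, ← Finset.sum_add_distrib, ← Finset.sum_add_distrib]
  refine Finset.sum_le_sum fun l _ => ?_
  have h := bonferroni_perpoint d (μc l) (hμc l) (fun α i => μ α i l)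
    (fun α i => hμ α i l)
  simp only [add_assoc]
  simpa using h
end

section
/- Suppose for a d-dimensional quantum system (d ≥ 4 a prime power) an ontological model on a finite ontic space Λ exactly reproduces the Born rule for d+1 mutually unbiased bases and for the PP-incompatibility measurements on all triples (e^α_i, e^β_j, c) with α ≠ β, where c is a fixed element of one basis and {e^γ_i} are the other d bases. If additionally ∑_λ min(μ_ψ(λ), μ_φ(λ)) ≥ k(1 − √(1 − |⟨ψ|φ⟩|²)) for all pairs of these states, then k ≤ (1/d)(1 + √(1 − 1/d)) < 2/d; in particular no such model has k = 1. -/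
/-- Main no-go theorem of Barrett–Cavalcanti–Lal–Maroney: for a `d`-dimensional
quantum system (`d ≥ 4` a prime power), an ontological model on a finite ontic
space `Λ` that reproduces the Born rule for `d+1` mutually unbiased bases
(whence orthogonal states have disjoint epistemic supports, via the
response functions `ξproj`) and for the PP-incompatibility measurements on all
triples `(e α i, e β j, c)` with `α ≠ β` (via the response functions `ξpp`),
and which moreover satisfies the overlap lower bound
`∑ min(μ_ψ, μ_φ) ≥ k (1 - √(1 - |⟨ψ|φ⟩|²))` for all pairs of these states,
must have `k ≤ (1/d)(1 + √(1 - 1/d)) < 2/d`; in particular `k ≠ 1`. -/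
theorem no_maximally_psi_epistemic_model
    (d : ℕ) (hd : 4 ≤ d) (hpp : IsPrimePow d)
    (Λ : Type) [Fintype Λ] (k : ℝ)
    -- the quantum states: a fixed state c and d mutually unbiased bases e^γ
    (c : EuclideanSpace ℂ (Fin d)) (e : Fin d → Fin d → EuclideanSpace ℂ (Fin d))
    (hc : ‖c‖ = 1)
    (horth : ∀ γ, Orthonormal ℂ (e γ))
    (hmub : ∀ α β : Fin d, α ≠ β → ∀ i j : Fin d,
      ‖(inner ℂ (e α i) (e β j) : ℂ)‖^2 = 1 / d)
    (hmubc : ∀ γ i, ‖(inner ℂ c (e γ i) : ℂ)‖^2 = 1 / d)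
    -- the epistemic states of the ontological model
    (μc : Λ → ℝ) (μ : Fin d → Fin d → Λ → ℝ)
    (hμc0 : ∀ l, 0 ≤ μc l) (hμc1 : ∑ l, μc l = 1)
    (hμ0 : ∀ γ i l, 0 ≤ μ γ i l) (hμ1 : ∀ γ i, ∑ l, μ γ i l = 1)
    -- reproducing the projective measurement on each basis e^γ:
    -- response functions summing to one, with Born-rule statistics
    (ξproj : Fin d → Fin d → Λ → ℝ)
    (hξproj0 : ∀ γ i l, 0 ≤ ξproj γ i l)
    (hξprojsum : ∀ γ l, ∑ i, ξproj γ i l = 1)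
    (hξprojborn : ∀ γ i j, ∑ l, ξproj γ i l * μ γ j l = if i = j then 1 else 0)
    -- reproducing the PP-incompatibility measurement for each triple
    -- (e α i, e β j, c) with α ≠ β: a four-outcome measurement whose first
    -- three outcomes have zero Born probability on e α i, e β j, c respectively
    (ξpp : ∀ (_α _β _i _j : Fin d), Fin 4 → Λ → ℝ)
    (hξpp0 : ∀ α β i j m l, 0 ≤ ξpp α β i j m l)
    (hξppsum : ∀ α β i j l, ∑ m, ξpp α β i j m l = 1)
    (hξpp1 : ∀ α β : Fin d, α ≠ β → ∀ i j : Fin d,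
      ∑ l, ξpp α β i j 0 l * μ α i l = 0)
    (hξpp2 : ∀ α β : Fin d, α ≠ β → ∀ i j : Fin d,
      ∑ l, ξpp α β i j 1 l * μ β j l = 0)
    (hξpp3 : ∀ α β : Fin d, α ≠ β → ∀ i j : Fin d,
      ∑ l, ξpp α β i j 2 l * μc l = 0)
    (hξpp4 : ∀ α β : Fin d, α ≠ β → ∀ i j : Fin d,
      ∑ l, ξpp α β i j 3 l * μ α i l = 0 ∧
      ∑ l, ξpp α β i j 3 l * μ β j l = 0 ∧
      ∑ l, ξpp α β i j 3 l * μc l = 0)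
    -- the overlap lower bound for all pairs of these states
    (hk1 : ∀ γ i, ∑ l, min (μc l) (μ γ i l)
      ≥ k * (1 - Real.sqrt (1 - ‖(inner ℂ c (e γ i) : ℂ)‖^2)))
    (hk2 : ∀ α β i j, (α, i) ≠ (β, j) → ∑ l, min (μ α i l) (μ β j l)
      ≥ k * (1 - Real.sqrt (1 - ‖(inner ℂ (e α i) (e β j) : ℂ)‖^2))) :
    k ≤ (1 / d) * (1 + Real.sqrt (1 - 1 / d)) ∧ k < 2 / d ∧ k ≠ 1 := by
  classical
  -- helper: nonnegative sums that vanish have all terms zero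
  have hzero : ∀ (f : Λ → ℝ), (∀ l, 0 ≤ f l) → ∑ l, f l = 0 → ∀ l, f l = 0 := by
    intro f hf hsum l
    exact (Finset.sum_eq_zero_iff_of_nonneg (fun x _ => hf x)).1 hsum l (Finset.mem_univ l)
  -- within each basis, epistemic supports are disjoint
  have disj : ∀ γ i j, i ≠ j → ∀ l, μ γ i l ≠ 0 → μ γ j l = 0 := by
    intro γ i j hij l hi
    by_contra hj
    have hker : ∀ m x, m ≠ x → ∀ l', μ γ x l' ≠ 0 → ξproj γ m l' = 0 := by
      intro m x hmx l' hx
      have hs0 : ∑ l'', ξproj γ m l'' * μ γ x l'' = 0 := by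
        rw [hξprojborn γ m x]; simp [hmx]
      have := hzero _ (fun l'' => mul_nonneg (hξproj0 γ m l'') (hμ0 γ x l'')) hs0 l'
      rcases mul_eq_zero.1 this with h | h
      · exact h
      · exact absurd h hx
    have hall : ∀ m, ξproj γ m l = 0 := by
      intro m
      by_cases hmi : m = i
      · exact hker m j (hmi ▸ hij) l hj
      · exact hker m i hmi l hi
    have := hξprojsum γ l
    simp [hall] at this
  -- triple-support emptiness from the PP-incompatibility measurements
  have triple : ∀ α β, α ≠ β → ∀ i j l, μc l ≠ 0 → μ α i l ≠ 0 → μ β j l = 0 := by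
    intro α β hab i j l hcl hal
    by_contra hbl
    have t0 : ξpp α β i j 0 l = 0 := by
      have := hzero _ (fun l' => mul_nonneg (hξpp0 α β i j 0 l') (hμ0 α i l')) (hξpp1 α β hab i j) l
      rcases mul_eq_zero.1 this with h | h
      exacts [h, absurd h hal]
    have t1 : ξpp α β i j 1 l = 0 := by
      have := hzero _ (fun l' => mul_nonneg (hξpp0 α β i j 1 l') (hμ0 β j l')) (hξpp2 α β hab i j) l
      rcases mul_eq_zero.1 this with h | h
      exacts [h, absurd h hbl]
    have t2 : ξpp α β i j 2 l = 0 := by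
      have := hzero _ (fun l' => mul_nonneg (hξpp0 α β i j 2 l') (hμc0 l')) (hξpp3 α β hab i j) l
      rcases mul_eq_zero.1 this with h | h
      exacts [h, absurd h hcl]
    have t3 : ξpp α β i j 3 l = 0 := by
      have := hzero _ (fun l' => mul_nonneg (hξpp0 α β i j 3 l') (hμ0 α i l')) (hξpp4 α β hab i j).1 l
      rcases mul_eq_zero.1 this with h | h
      exacts [h, absurd h hal]
    have hsum := hξppsum α β i j l
    rw [Fin.sum_univ_four] at hsum
    rw [t0, t1, t2, t3] at hsum
    norm_num at hsum
  -- pointwise: at most one of the d² states overlaps μc at a given λ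
  have key : ∀ l, ∑ γ, ∑ i, min (μc l) (μ γ i l) ≤ μc l := by
    intro l
    by_cases hex : ∃ γ i, μ γ i l ≠ 0
    · obtain ⟨γ₀, i₀, h₀⟩ := hex
      by_cases hc0 : μc l = 0
      · apply le_of_eq
        rw [hc0]
        apply Finset.sum_eq_zero; intro γ _
        apply Finset.sum_eq_zero; intro i _
        exact min_eq_left (hμ0 γ i l)
      · have honly : ∀ γ i, ¬(γ = γ₀ ∧ i = i₀) → μ γ i l = 0 := by
          intro γ i hne
          by_cases hγ : γ = γ₀
          · subst hγ
            have hii : i ≠ i₀ := fun h => hne ⟨rfl, h⟩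
            exact disj γ i₀ i (Ne.symm hii) l h₀
          · exact triple γ₀ γ (fun h => hγ h.symm) i₀ i l hc0 h₀
        have hval : ∀ γ, ∑ i, min (μc l) (μ γ i l)
            = if γ = γ₀ then min (μc l) (μ γ₀ i₀ l) else 0 := by
          intro γ
          by_cases hγ : γ = γ₀
          · subst hγ
            rw [if_pos rfl]
            rw [Finset.sum_eq_single i₀]
            · intro i _ hi
              rw [honly γ i (fun h => hi h.2), min_eq_right (hμc0 l)]
            · intro h; exact absurd (Finset.mem_univ i₀) h
          · rw [if_neg hγ]
            apply Finset.sum_eq_zero; intro i _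
            rw [honly γ i (fun h => hγ h.1), min_eq_right (hμc0 l)]
        calc ∑ γ, ∑ i, min (μc l) (μ γ i l)
            = ∑ γ, if γ = γ₀ then min (μc l) (μ γ₀ i₀ l) else 0 := by
              exact Finset.sum_congr rfl (fun γ _ => hval γ)
          _ = min (μc l) (μ γ₀ i₀ l) := by simp
          _ ≤ μc l := min_le_left _ _
    · push_neg at hex
      apply le_trans (le_of_eq ?_) (hμc0 l)
      apply Finset.sum_eq_zero; intro γ _
      apply Finset.sum_eq_zero; intro i _
      rw [hex γ i, min_eq_right (hμc0 l)]
  -- total overlap bound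
  have total : ∑ γ : Fin d, ∑ i : Fin d, (∑ l, min (μc l) (μ γ i l)) ≤ 1 := by
    have hswap : ∑ γ : Fin d, ∑ i : Fin d, (∑ l, min (μc l) (μ γ i l))
        = ∑ l, ∑ γ : Fin d, ∑ i : Fin d, min (μc l) (μ γ i l) := by
      calc ∑ γ : Fin d, ∑ i : Fin d, (∑ l, min (μc l) (μ γ i l))
          = ∑ γ : Fin d, ∑ l, ∑ i : Fin d, min (μc l) (μ γ i l) :=
            Finset.sum_congr rfl (fun γ _ => Finset.sum_comm)
        _ = ∑ l, ∑ γ : Fin d, ∑ i : Fin d, min (μc l) (μ γ i l) :=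
            Finset.sum_comm
    rw [hswap]
    calc ∑ l, ∑ γ : Fin d, ∑ i : Fin d, min (μc l) (μ γ i l)
        ≤ ∑ l, μc l := Finset.sum_le_sum (fun l _ => key l)
      _ = 1 := hμc1
  -- numerics
  set D : ℝ := (d : ℝ) with hD
  have hD4 : (4 : ℝ) ≤ D := by rw [hD]; exact_mod_cast hd
  have hDpos : (0 : ℝ) < D := by linarith
  have hDne : D ≠ 0 := ne_of_gt hDpos
  have h0le : (0 : ℝ) ≤ 1 - 1 / D := by
    have : 1 / D ≤ 1 := by rw [div_le_one hDpos]; linarith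
    linarith
  set s : ℝ := Real.sqrt (1 - 1 / D) with hs
  have hs0 : 0 ≤ s := Real.sqrt_nonneg _
  have hsq : s ^ 2 = 1 - 1 / D := Real.sq_sqrt h0le
  have hs1 : s < 1 := by
    have h1 : (1 : ℝ) - 1 / D < 1 := by
      have : 0 < 1 / D := by positivity
      linarith
    calc s < Real.sqrt 1 := Real.sqrt_lt_sqrt h0le h1
      _ = 1 := Real.sqrt_one
  have ht : 0 < 1 - s := by linarith
  -- lower bound on each overlap, then total
  have hlow : ∀ γ i : Fin d, k * (1 - s) ≤ ∑ l, min (μc l) (μ γ i l) := by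
    intro γ i
    have := hk1 γ i
    rw [hmubc γ i] at this
    exact this
  have hbound : D * (D * (k * (1 - s))) ≤ 1 := by
    calc D * (D * (k * (1 - s)))
        = ∑ _γ : Fin d, ∑ _i : Fin d, k * (1 - s) := by
          simp [Finset.sum_const, Finset.card_univ, hD]
          try ring
      _ ≤ ∑ γ : Fin d, ∑ i : Fin d, (∑ l, min (μc l) (μ γ i l)) :=
          Finset.sum_le_sum (fun γ _ => Finset.sum_le_sum (fun i _ => hlow γ i))
      _ ≤ 1 := total
  have hid : (1 - s) * (1 + s) = 1 / D := by
    have : (1 - s) * (1 + s) = 1 - s ^ 2 := by ring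
    rw [this, hsq]; ring
  have hpos : 0 < D * (D * (1 - s)) := by
    apply mul_pos hDpos (mul_pos hDpos ht)
  have hmain : k ≤ (1 / D) * (1 + s) := by
    have hA : (1 / D) * (1 + s) * (D * (D * (1 - s))) = 1 := by
      have : (1 / D) * (1 + s) * (D * (D * (1 - s)))
          = ((1 - s) * (1 + s)) * D * (D * (1 / D)) := by ring
      rw [this, hid]
      field_simp
    nlinarith [hbound, hA, hpos]
  have hlt : (1 / D) * (1 + s) < 2 / D := by
    have : (1 / D) * (1 + s) < (1 / D) * 2 :=
      mul_lt_mul_of_pos_left (by linarith) (by positivity)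
    calc (1 / D) * (1 + s) < (1 / D) * 2 := this
      _ = 2 / D := by ring
  refine ⟨hmain, lt_of_le_of_lt hmain hlt, ?_⟩
  have h2d : 2 / D ≤ 1 / 2 := by
    rw [div_le_div_iff₀ hDpos (by norm_num)]
    linarith
  intro hk
  have : k < 1 := lt_of_lt_of_le (lt_of_le_of_lt hmain hlt) (by linarith)
  rw [hk] at this
  exact lt_irrefl 1 this
end
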